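/- With I_P and I_Q as above, ρ* ∈ P(X) is an L¹-local minimizer of I_P if and only if ρ* = ρ_{b*} for a local minimizer b* ∈ Q of I_Q. In particular every L¹-local minimizer of I_P is of maximal-entropy form and is essentially bounded away from 0 and ∞. -/

import Mathlib

open MeasureTheory Filter

def probDens {X : Type*} [MeasurableSpace X] (μ : Measure X) : Set (X → ℝ) :=
  {ρ | Integrable ρ μ ∧ 0 ≤ᵐ[μ] ρ ∧ ∫ t, ρ t ∂μ = 1}

/-- The vector of moments of `a` under the density `ρ`. -/
noncomputable def mom {X : Type*} [MeasurableSpace X] (μ : Measure X) {k : ℕ}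
    (a : X → EuclideanSpace ℝ (Fin k)) (ρ : X → ℝ) : EuclideanSpace ℝ (Fin k) :=
  (EuclideanSpace.equiv (Fin k) ℝ).symm fun i => ∫ t, a t i * ρ t ∂μ

/-- The set `Q` of admissible moments. -/
def momentSet {X : Type*} [MeasurableSpace X] (μ : Measure X) {k : ℕ}
    (a : X → EuclideanSpace ℝ (Fin k)) : Set (EuclideanSpace ℝ (Fin k)) :=
  mom μ a '' probDens μ

lemma coord_abs_le_norm {k : ℕ} (x : EuclideanSpace ℝ (Fin k)) (i : Fin k) : |x i| ≤ ‖x‖ := by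
  rw [EuclideanSpace.norm_eq]
  have h : ‖x i‖ ^ 2 ≤ ∑ j, ‖x j‖ ^ 2 :=
    Finset.single_le_sum (f := fun j => ‖x j‖ ^ 2) (fun j _ => sq_nonneg _) (Finset.mem_univ i)
  calc |x i| = Real.sqrt (‖x i‖ ^ 2) := by
        rw [Real.sqrt_sq (norm_nonneg _), Real.norm_eq_abs]
    _ ≤ _ := Real.sqrt_le_sqrt h

lemma convex_linear_lb {φ : ℝ → ℝ} (h : ConvexOn ℝ (Set.Ici 0) φ) :
    ∀ x : ℝ, 0 ≤ x → φ 1 - (|φ 1 - φ 0| + |φ 1 - φ 2|) * (x + 1) ≤ φ x := by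
  intro x hx
  rcases le_or_gt x 1 with hx1 | hx1
  · have h2x : (0:ℝ) < 2 - x := by linarith
    have hcomb := h.2 (Set.mem_Ici.mpr hx) (show (2:ℝ) ∈ Set.Ici (0:ℝ) by norm_num)
      (show (0:ℝ) ≤ 1/(2-x) by positivity)
      (show (0:ℝ) ≤ (1-x)/(2-x) by apply div_nonneg <;> linarith)
      (by field_simp; ring)
    have harg : (1/(2-x)) • x + ((1-x)/(2-x)) • (2:ℝ) = 1 := by
      simp only [smul_eq_mul]; field_simp; ring
    rw [harg] at hcomb
    simp only [smul_eq_mul] at hcomb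
    have h3 : (2 - x) * φ 1 ≤ φ x + (1-x) * φ 2 := by
      have := mul_le_mul_of_nonneg_left hcomb h2x.le
      calc (2-x) * φ 1 ≤ (2-x) * ((1/(2-x)) * φ x + ((1-x)/(2-x)) * φ 2) := this
        _ = φ x + (1-x) * φ 2 := by field_simp
    nlinarith [neg_abs_le (φ 1 - φ 2), abs_nonneg (φ 1 - φ 0), abs_nonneg (φ 1 - φ 2),
      le_abs_self (φ 1 - φ 2)]
  · have hx0 : (0:ℝ) < x := by linarith
    have hcomb := h.2 (Set.mem_Ici.mpr le_rfl) (Set.mem_Ici.mpr hx)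
      (show (0:ℝ) ≤ (x-1)/x by apply div_nonneg <;> linarith)
      (show (0:ℝ) ≤ 1/x by positivity)
      (by field_simp; ring)
    have harg : ((x-1)/x) • (0:ℝ) + (1/x) • x = 1 := by
      simp only [smul_eq_mul]; field_simp; ring
    rw [harg] at hcomb
    simp only [smul_eq_mul] at hcomb
    have h3 : x * φ 1 ≤ (x-1) * φ 0 + φ x := by
      have := mul_le_mul_of_nonneg_left hcomb hx0.le
      calc x * φ 1 ≤ x * ((x-1)/x * φ 0 + 1/x * φ x) := this
        _ = (x-1) * φ 0 + φ x := by field_simp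
    nlinarith [neg_abs_le (φ 1 - φ 0), abs_nonneg (φ 1 - φ 0), abs_nonneg (φ 1 - φ 2),
      le_abs_self (φ 1 - φ 0)]

set_option maxHeartbeats 1000000 in
/-- One-to-one correspondence between `L¹`-local minimisers of the microscopic free
energy `I_P` and local minimisers of the macroscopic free energy `I_Q`: `ρ*` is an
`L¹`-local minimiser of `I_P` iff `ρ* = ρ_{b*}` (a.e.) for a local minimiser `b*`
of `I_Q`; in particular every `L¹`-local minimiser of `I_P` is of maximal-entropy form
and essentially bounded away from `0` and `∞`. -/
theorem local_minimisers_equiv {X : Type*} [MeasurableSpace X]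
    (μ : Measure X) [IsFiniteMeasure μ] {k : ℕ}
    (a : X → EuclideanSpace ℝ (Fin k)) (ha : MemLp a ⊤ μ)
    (φ : ℝ → ℝ)
    (hconv : StrictConvexOn ℝ (Set.Ioi 0) φ) (hconv0 : ConvexOn ℝ (Set.Ici 0) φ)
    (ψ : EuclideanSpace ℝ (Fin k) → ℝ) (ρmin : EuclideanSpace ℝ (Fin k) → X → ℝ)
    (hρP : ∀ b ∈ momentSet μ a, ρmin b ∈ probDens μ)
    (hρgen : ∀ b ∈ momentSet μ a, mom μ a (ρmin b) = b)
    (hρint : ∀ b ∈ momentSet μ a, Integrable (fun t => φ (ρmin b t)) μ)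
    (hψ : ∀ b ∈ momentSet μ a, ψ b = ∫ t, φ (ρmin b t) ∂μ)
    (hmin : ∀ b ∈ momentSet μ a, ∀ ρ ∈ probDens μ, mom μ a ρ = b →
      Integrable (fun t => φ (ρ t)) μ → ψ b ≤ ∫ t, φ (ρ t) ∂μ)
    (huniq : ∀ b ∈ momentSet μ a, ∀ ρ ∈ probDens μ, mom μ a ρ = b →
      Integrable (fun t => φ (ρ t)) μ → ψ b = ∫ t, φ (ρ t) ∂μ → ρ =ᵐ[μ] ρmin b)
    -- the optimal densities are bounded away from 0 and ∞
    (hbdd : ∀ b ∈ momentSet μ a, ∃ c C : ℝ, 0 < c ∧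
      ∀ᵐ t ∂μ, c ≤ ρmin b t ∧ ρmin b t ≤ C)
    -- |b_ρ − b_σ| ≤ ‖a‖_∞ ‖ρ − σ‖_{L¹}
    (Ca : ℝ) (hCa : 0 ≤ Ca)
    (hL1 : ∀ ρ σ : X → ℝ, Integrable ρ μ → Integrable σ μ →
      ‖mom μ a ρ - mom μ a σ‖ ≤ Ca * ∫ t, |ρ t - σ t| ∂μ)
    -- continuity of b ↦ ρ_b into L¹
    (hcont : ∀ b ∈ momentSet μ a, ∀ δ : ℝ, 0 < δ → ∃ η : ℝ, 0 < η ∧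
      ∀ b' ∈ momentSet μ a, ‖b' - b‖ < η → ∫ t, |ρmin b' t - ρmin b t| ∂μ < δ)
    -- the constraint set A and the function f
    (A : Set (EuclideanSpace ℝ (Fin k))) (hAne : A.Nonempty)
    (hAQ : A ⊆ momentSet μ a) (hAcl : closure A ∩ momentSet μ a ⊆ A)
    (f : EuclideanSpace ℝ (Fin k) → ℝ) (hf : ContinuousOn f A) :
    let SP : Set (X → ℝ) := {ρ | ρ ∈ probDens μ ∧
      Integrable (fun t => φ (ρ t)) μ ∧ mom μ a ρ ∈ A}
    let IP : (X → ℝ) → ℝ := fun ρ => (∫ t, φ (ρ t) ∂μ) + f (mom μ a ρ)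
    let IQ : EuclideanSpace ℝ (Fin k) → ℝ := fun b => ψ b + f b
    ∀ ρstar ∈ SP,
      ((∃ ε : ℝ, 0 < ε ∧ ∀ σ ∈ SP,
          (∫ t, |σ t - ρstar t| ∂μ) < ε → IP ρstar ≤ IP σ) ↔
        (∃ bstar ∈ A, (∃ ε : ℝ, 0 < ε ∧ ∀ b ∈ A, ‖b - bstar‖ < ε → IQ bstar ≤ IQ b) ∧
          ρstar =ᵐ[μ] ρmin bstar)) ∧
      ((∃ ε : ℝ, 0 < ε ∧ ∀ σ ∈ SP,
          (∫ t, |σ t - ρstar t| ∂μ) < ε → IP ρstar ≤ IP σ) →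
        ∃ c C : ℝ, 0 < c ∧ ∀ᵐ t ∂μ, c ≤ ρstar t ∧ ρstar t ≤ C) := by
  intro SP IP IQ ρstar hρstar
  obtain ⟨hρPs, hρis, hρAs⟩ := hρstar
  have hIP : ∀ ρ, IP ρ = (∫ t, φ (ρ t) ∂μ) + f (mom μ a ρ) := fun _ => rfl
  have hIQ : ∀ b, IQ b = ψ b + f b := fun _ => rfl
  set bstar := mom μ a ρstar with hbstar
  have hbQ : bstar ∈ momentSet μ a := hAQ hρAs
  have intρ : Integrable ρstar μ := hρPs.1
  have intmin : Integrable (ρmin bstar) μ := (hρP bstar hbQ).1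
  -- a.e. bound on ‖a t‖
  have hMfin : eLpNormEssSup a μ ≠ ⊤ := by
    have := ha.2; rw [eLpNorm_exponent_top] at this; exact this.ne
  have hMae : ∀ᵐ t ∂μ, ‖a t‖ ≤ (eLpNormEssSup a μ).toReal := by
    filter_upwards [enorm_ae_le_eLpNormEssSup a μ] with t ht
    have := ENNReal.toReal_mono hMfin ht
    simpa using this
  -- integrability of coordinates times densities
  have haiρ : ∀ ρ : X → ℝ, Integrable ρ μ → ∀ i : Fin k,
      Integrable (fun t => a t i * ρ t) μ := by
    intro ρ hρ i
    refine Integrable.bdd_mul (c := (eLpNormEssSup a μ).toReal) hρ ?_ ?_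
    · exact (PiLp.proj (𝕜 := ℝ) 2 (fun _ : Fin k => ℝ) i).continuous.comp_aestronglyMeasurable
        ha.aestronglyMeasurable
    · filter_upwards [hMae] with t ht
      exact le_trans (by simpa [Real.norm_eq_abs] using coord_abs_le_norm (a t) i) ht
  have mom_congr : ∀ ρ σ : X → ℝ, ρ =ᵐ[μ] σ → mom μ a ρ = mom μ a σ := by
    intro ρ σ h
    unfold mom; congr 1; funext i
    exact integral_congr_ae (h.mono fun t ht => by simp only [ht])
  -- the forward implication (local min of IP gives a local min of IQ)
  have forward : (∃ ε : ℝ, 0 < ε ∧ ∀ σ ∈ SP,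
        (∫ t, |σ t - ρstar t| ∂μ) < ε → IP ρstar ≤ IP σ) →
      (∃ bs ∈ A, (∃ ε : ℝ, 0 < ε ∧ ∀ b ∈ A, ‖b - bs‖ < ε → IQ bs ≤ IQ b) ∧
          ρstar =ᵐ[μ] ρmin bs) := by
    rintro ⟨ε, hε, hloc⟩
    obtain ⟨c, C, hc, hcC⟩ := hbdd bstar hbQ
    set D := ∫ t, |ρmin bstar t - ρstar t| ∂μ with hD
    have hD0 : 0 ≤ D := integral_nonneg fun t => abs_nonneg _
    set lam : ℝ := min (1/2) (ε / (2 * (D + 1))) with hlam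
    have hlam0 : 0 < lam := by
      apply lt_min (by norm_num)
      positivity
    have hlam1 : lam < 1 := lt_of_le_of_lt (min_le_left _ _) (by norm_num)
    have hlamD : lam * D < ε := by
      have h1 : lam ≤ ε / (2 * (D + 1)) := min_le_right _ _
      have h2 : lam * D ≤ (ε / (2 * (D + 1))) * D :=
        mul_le_mul_of_nonneg_right h1 hD0
      have h3 : (ε / (2 * (D + 1))) * D < ε := by
        rw [div_mul_eq_mul_div, div_lt_iff₀ (by positivity)]
        nlinarith
      linarith
    set σlam : X → ℝ := fun t => (1 - lam) * ρstar t + lam * ρmin bstar t with hσlam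
    have intσ : Integrable σlam μ := (intρ.const_mul _).add (intmin.const_mul _)
    have hσnn : 0 ≤ᵐ[μ] σlam := by
      filter_upwards [hρPs.2.1, (hρP bstar hbQ).2.1] with t h1 h2
      have : 0 ≤ (1 - lam) * ρstar t + lam * ρmin bstar t := by
        apply add_nonneg
        · exact mul_nonneg (by linarith) h1
        · exact mul_nonneg hlam0.le h2
      exact this
    have hσ1 : ∫ t, σlam t ∂μ = 1 := by
      rw [hσlam]
      rw [integral_add (intρ.const_mul _) (intmin.const_mul _),
        integral_const_mul, integral_const_mul, hρPs.2.2, (hρP bstar hbQ).2.2]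
      ring
    have hσP : σlam ∈ probDens μ := ⟨intσ, hσnn, hσ1⟩
    have hmomσ : mom μ a σlam = bstar := by
      apply (EuclideanSpace.equiv (Fin k) ℝ).injective
      funext i
      have h1 : (fun t => a t i * σlam t) =
          fun t => (1 - lam) * (a t i * ρstar t) + lam * (a t i * ρmin bstar t) := by
        funext t; simp only [hσlam]; ring
      have h2 : (mom μ a σlam) i = ∫ t, a t i * σlam t ∂μ := rfl
      have h3 : ∫ t, a t i * σlam t ∂μ
          = (1 - lam) * ∫ t, a t i * ρstar t ∂μ + lam * ∫ t, a t i * ρmin bstar t ∂μ := by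
        rw [h1, integral_add ((haiρ _ intρ i).const_mul _) ((haiρ _ intmin i).const_mul _),
          integral_const_mul, integral_const_mul]
      have h4 : (mom μ a (ρmin bstar)) i = bstar i := by rw [hρgen bstar hbQ]
      have h5 : (mom μ a (ρmin bstar)) i = ∫ t, a t i * ρmin bstar t ∂μ := rfl
      have h6 : (bstar : EuclideanSpace ℝ (Fin k)) i = ∫ t, a t i * ρstar t ∂μ := rfl
      show (mom μ a σlam) i = bstar i
      rw [h2, h3, ← h5, h4, ← h6]; ring
    -- lower bound a.e.
    have hσlb : ∀ᵐ t ∂μ, lam * c ≤ σlam t := by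
      filter_upwards [hρPs.2.1, hcC] with t h1 h2
      have e1 : lam * c ≤ lam * ρmin bstar t := mul_le_mul_of_nonneg_left h2.1 hlam0.le
      have e2 : 0 ≤ (1 - lam) * ρstar t := mul_nonneg (by linarith) h1
      have : lam * c ≤ (1 - lam) * ρstar t + lam * ρmin bstar t := by linarith
      exact this
    -- integrability of φ ∘ σlam
    have hφcont : ContinuousOn φ (Set.Ioi 0) := hconv.convexOn.continuousOn isOpen_Ioi
    have hmaxcont : Continuous fun x : ℝ => φ (max x (lam * c)) :=
      hφcont.comp_continuous (continuous_id.max continuous_const)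
        (fun x => Set.mem_Ioi.mpr (lt_of_lt_of_le (by positivity) (le_max_right _ _)))
    have haesm : AEStronglyMeasurable (fun t => φ (σlam t)) μ := by
      have h1 : AEStronglyMeasurable (fun t => φ (max (σlam t) (lam * c))) μ :=
        hmaxcont.comp_aestronglyMeasurable intσ.aestronglyMeasurable
      refine h1.congr ?_
      filter_upwards [hσlb] with t ht
      rw [max_eq_left ht]
    set K : ℝ := |φ 1 - φ 0| + |φ 1 - φ 2| with hK
    have hK0 : 0 ≤ K := add_nonneg (abs_nonneg _) (abs_nonneg _)
    have hgint : Integrable (fun t => (1 - lam) * |φ (ρstar t)| + lam * |φ (ρmin bstar t)|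
        + (|φ 1| + K * (σlam t + 1))) μ := by
      apply Integrable.add
      · exact (hρis.abs.const_mul _).add ((hρint bstar hbQ).abs.const_mul _)
      · apply Integrable.add (integrable_const _)
        have : (fun t => K * (σlam t + 1)) = fun t => K * σlam t + K := by
          funext t; ring
        rw [this]
        exact (intσ.const_mul _).add (integrable_const _)
    have hptwise : ∀ᵐ t ∂μ, φ (σlam t) ≤ (1 - lam) * φ (ρstar t) + lam * φ (ρmin bstar t) := by
      filter_upwards [hρPs.2.1, (hρP bstar hbQ).2.1] with t h1 h2
      have := hconv0.2 (Set.mem_Ici.mpr h1) (Set.mem_Ici.mpr h2)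
        (show (0:ℝ) ≤ 1 - lam by linarith) hlam0.le (by ring)
      simpa [smul_eq_mul] using this
    have hφσint : Integrable (fun t => φ (σlam t)) μ := by
      apply Integrable.mono' hgint haesm
      filter_upwards [hptwise, hσnn, hρPs.2.1, (hρP bstar hbQ).2.1] with t h1 h2 h3 h4
      have h2' : 0 ≤ σlam t := h2
      have n1 : 0 ≤ (1 - lam) * |φ (ρstar t)| := mul_nonneg (by linarith) (abs_nonneg _)
      have n2 : 0 ≤ lam * |φ (ρmin bstar t)| := mul_nonneg hlam0.le (abs_nonneg _)
      have n3 := neg_abs_le (φ 1)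
      have n4 : 0 ≤ K * (σlam t + 1) := mul_nonneg hK0 (by linarith)
      rw [Real.norm_eq_abs, abs_le]
      constructor
      · have hlb := convex_linear_lb hconv0 (σlam t) h2'
        rw [← hK] at hlb
        linarith
      · have e1 : (1 - lam) * φ (ρstar t) ≤ (1 - lam) * |φ (ρstar t)| :=
          mul_le_mul_of_nonneg_left (le_abs_self _) (by linarith)
        have e2 : lam * φ (ρmin bstar t) ≤ lam * |φ (ρmin bstar t)| :=
          mul_le_mul_of_nonneg_left (le_abs_self _) hlam0.le
        linarith [abs_nonneg (φ 1)]
    have hσSP : σlam ∈ SP := ⟨hσP, hφσint, by rw [hmomσ]; exact hρAs⟩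
    have hdist : (∫ t, |σlam t - ρstar t| ∂μ) < ε := by
      have heq : (fun t => |σlam t - ρstar t|) = fun t => lam * |ρmin bstar t - ρstar t| := by
        funext t
        rw [show σlam t - ρstar t = lam * (ρmin bstar t - ρstar t) by simp only [hσlam]; ring,
          abs_mul, abs_of_pos hlam0]
      rw [heq, integral_const_mul]
      exact hlamD
    have hIPle := hloc σlam hσSP hdist
    rw [hIP, hIP, hmomσ] at hIPle
    have hub : ∫ t, φ (σlam t) ∂μ ≤ (1 - lam) * ∫ t, φ (ρstar t) ∂μ
        + lam * ∫ t, φ (ρmin bstar t) ∂μ := by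
      have h := integral_mono_ae hφσint
        ((hρis.const_mul (1 - lam)).add ((hρint bstar hbQ).const_mul lam)) hptwise
      simp only [Pi.add_apply] at h
      rwa [integral_add (hρis.const_mul _) ((hρint bstar hbQ).const_mul _),
        integral_const_mul, integral_const_mul] at h
    have hψb := hψ bstar hbQ
    have hle1 : ∫ t, φ (ρstar t) ∂μ ≤ ψ bstar := by
      have h1 : ∫ t, φ (ρstar t) ∂μ ≤ ∫ t, φ (σlam t) ∂μ := by linarith
      nlinarith
    have hge1 : ψ bstar ≤ ∫ t, φ (ρstar t) ∂μ := hmin bstar hbQ ρstar hρPs rfl hρis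
    have heqψ : ψ bstar = ∫ t, φ (ρstar t) ∂μ := le_antisymm hge1 hle1
    have hae : ρstar =ᵐ[μ] ρmin bstar := huniq bstar hbQ ρstar hρPs rfl hρis heqψ
    obtain ⟨η, hη, hηc⟩ := hcont bstar hbQ ε hε
    refine ⟨bstar, hρAs, ⟨η, hη, ?_⟩, hae⟩
    intro b hbA hbnear
    have hbQ' : b ∈ momentSet μ a := hAQ hbA
    have hρbSP : ρmin b ∈ SP := ⟨hρP b hbQ', hρint b hbQ', by rw [hρgen b hbQ']; exact hbA⟩
    have hd2 : (∫ t, |ρmin b t - ρstar t| ∂μ) < ε := by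
      have h1 := hηc b hbQ' hbnear
      have h2 : (∫ t, |ρmin b t - ρstar t| ∂μ) = ∫ t, |ρmin b t - ρmin bstar t| ∂μ :=
        integral_congr_ae (hae.mono fun t ht => by simp only [ht])
      linarith
    have h3 := hloc (ρmin b) hρbSP hd2
    rw [hIP, hIP, hρgen b hbQ'] at h3
    rw [hIQ, hIQ]
    rw [hψ b hbQ']
    calc ψ bstar + f bstar = ∫ t, φ (ρstar t) ∂μ + f bstar := by rw [heqψ]
      _ ≤ _ := h3
  constructor
  · constructor
    · exact forward
    · -- backward direction
      rintro ⟨b0, hb0A, ⟨ε', hε', hQloc⟩, hae⟩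
      have hb0Q : b0 ∈ momentSet μ a := hAQ hb0A
      have hmomeq : bstar = b0 := by
        rw [hbstar, mom_congr ρstar (ρmin b0) hae, hρgen b0 hb0Q]
      have hφeq : ∫ t, φ (ρstar t) ∂μ = ψ b0 := by
        rw [hψ b0 hb0Q]
        exact integral_congr_ae (hae.mono fun t ht => by simp only [ht])
      refine ⟨ε' / (Ca + 1), by positivity, ?_⟩
      intro σ hσSP hσnear
      obtain ⟨hσP, hσφint, hσA⟩ := hσSP
      have hnear : ‖mom μ a σ - b0‖ < ε' := by
        have h1 : ‖mom μ a σ - b0‖ ≤ Ca * ∫ t, |σ t - ρstar t| ∂μ := by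
          rw [← hmomeq]
          exact hL1 σ ρstar hσP.1 intρ
        have h2 : Ca * (∫ t, |σ t - ρstar t| ∂μ) ≤ Ca * (ε' / (Ca + 1)) :=
          mul_le_mul_of_nonneg_left hσnear.le hCa
        have h3 : Ca * (ε' / (Ca + 1)) < ε' := by
          rw [mul_comm, div_mul_eq_mul_div, div_lt_iff₀ (by positivity : (0:ℝ) < Ca + 1)]
          nlinarith
        linarith
      have h2 := hQloc (mom μ a σ) hσA hnear
      rw [hIQ, hIQ] at h2
      have h3 : ψ (mom μ a σ) ≤ ∫ t, φ (σ t) ∂μ :=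
        hmin (mom μ a σ) (hAQ hσA) σ hσP rfl hσφint
      rw [hIP, hIP, ← hbstar, hmomeq]
      linarith
  · intro hloc
    obtain ⟨b0, hb0A, _, hae⟩ := forward hloc
    obtain ⟨c, C, hc, hb⟩ := hbdd b0 (hAQ hb0A)
    refine ⟨c, C, hc, ?_⟩
    filter_upwards [hae, hb] with t h1 h2
    rw [h1]; exact h2
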